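/- arXiv:2108.00140 — 2 statements merged into one kernel-verified Lean document; each statement's English description precedes it below -/
import Mathlib

section
/- A Gorenstein (L,A)-projective module of finite projective dimension is projective. -/
open CategoryTheory CategoryTheory.Limits DirectSum

namespace DualityPaper

variable {R : Type} [Ring R]

/-- The right `R`-module structure on the group of additive maps out of a left `R`-module,
given by `(f • r) m = f (r • m)`. -/
instance charModuleRight (M A : Type) [AddCommGroup M] [AddCommGroup A] [Module R M] :
    Module Rᵐᵒᵖ (M →+ A) where
  smul r f := f.comp (DistribMulAction.toAddMonoidHom M r.unop)
  one_smul f := AddMonoidHom.ext fun m => by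
    show f ((1 : Rᵐᵒᵖ).unop • m) = f m
    simp
  mul_smul r s f := AddMonoidHom.ext fun m => by
    show f ((r * s).unop • m) = f (s.unop • r.unop • m)
    rw [MulOpposite.unop_mul, mul_smul]
  smul_zero r := rfl
  smul_add r f g := rfl
  add_smul r s f := AddMonoidHom.ext fun m => by
    show f ((r + s).unop • m) = f (r.unop • m) + f (s.unop • m)
    rw [MulOpposite.unop_add, add_smul, map_add]
  zero_smul f := AddMonoidHom.ext fun m => by
    show f ((0 : Rᵐᵒᵖ).unop • m) = 0
    simp

/-- The left `R`-module structure on the group of additive maps out of a right `R`-module. -/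
instance charModuleLeft (N A : Type) [AddCommGroup N] [AddCommGroup A] [Module Rᵐᵒᵖ N] :
    Module R (N →+ A) where
  smul r f := f.comp (DistribMulAction.toAddMonoidHom N (MulOpposite.op r))
  one_smul f := AddMonoidHom.ext fun m => by
    show f ((MulOpposite.op (1 : R)) • m) = f m
    simp
  mul_smul r s f := AddMonoidHom.ext fun m => by
    show f (MulOpposite.op (r * s) • m) = f (MulOpposite.op s • MulOpposite.op r • m)
    rw [MulOpposite.op_mul, mul_smul]
  smul_zero r := rfl
  smul_add r f g := rfl
  add_smul r s f := AddMonoidHom.ext fun m => by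
    show f (MulOpposite.op (r + s) • m) = f (MulOpposite.op r • m) + f (MulOpposite.op s • m)
    rw [MulOpposite.op_add, add_smul, map_add]
  zero_smul f := AddMonoidHom.ext fun m => by
    show f (MulOpposite.op (0 : R) • m) = 0
    simp

/-- The character module `M⁺ = Hom_ℤ(M, ℚ/ℤ)` of a left module, as a right module. -/
def charL (M : ModuleCat.{0} R) : ModuleCat.{0} Rᵐᵒᵖ :=
  ModuleCat.of Rᵐᵒᵖ (M →+ AddCircle (1 : ℚ))

/-- The character module `N⁺ = Hom_ℤ(N, ℚ/ℤ)` of a right module, as a left module. -/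
def charR (N : ModuleCat.{0} Rᵐᵒᵖ) : ModuleCat.{0} R :=
  ModuleCat.of R (N →+ AddCircle (1 : ℚ))

/-- A left module over a (possibly noncommutative) ring is flat iff its character module is an
injective right module (Lambek); we take this as the definition of flatness. -/
def IsFlatMod (M : ModuleCat.{0} R) : Prop := CategoryTheory.Injective (charL M)

/-- `f`, `g` form a short exact sequence `0 → A → B → C → 0`. -/
def SES {A B C : ModuleCat.{0} R} (f : A ⟶ B) (g : B ⟶ C) : Prop :=
  ∃ w : f ≫ g = 0, (ShortComplex.mk f g w).ShortExact

/-- Vanishing of `Ext^n_R(M, N)`. -/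
def ExtVanish (n : ℕ) (M N : ModuleCat.{0} R) : Prop :=
  Subsingleton (((_root_.Ext ℤ (ModuleCat.{0} R) n).obj (Opposite.op M)).obj N)

/-- A complete duality pair `(𝓛, 𝓐)` over `R`. -/
structure CompleteDualityPair (𝓛 : Set (ModuleCat.{0} R)) (𝓐 : Set (ModuleCat.{0} Rᵐᵒᵖ)) :
    Prop where
  isoClosed_L : ∀ {M N : ModuleCat.{0} R}, (M ≅ N) → M ∈ 𝓛 → N ∈ 𝓛
  isoClosed_A : ∀ {M N : ModuleCat.{0} Rᵐᵒᵖ}, (M ≅ N) → M ∈ 𝓐 → N ∈ 𝓐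
  char_mem_iff : ∀ M : ModuleCat.{0} R, M ∈ 𝓛 ↔ charL M ∈ 𝓐
  char_mem_iff' : ∀ N : ModuleCat.{0} Rᵐᵒᵖ, N ∈ 𝓐 ↔ charR N ∈ 𝓛
  summands_A : ∀ A ∈ 𝓐, ∀ (B : ModuleCat.{0} Rᵐᵒᵖ) (i : B ⟶ A) (p : A ⟶ B),
    i ≫ p = 𝟙 B → B ∈ 𝓐
  sums_A : ∀ A B : ModuleCat.{0} Rᵐᵒᵖ, A ∈ 𝓐 → B ∈ 𝓐 → ModuleCat.of Rᵐᵒᵖ (A × B) ∈ 𝓐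
  summands_L : ∀ L ∈ 𝓛, ∀ (K : ModuleCat.{0} R) (i : K ⟶ L) (p : L ⟶ K),
    i ≫ p = 𝟙 K → K ∈ 𝓛
  sums_L : ∀ L K : ModuleCat.{0} R, L ∈ 𝓛 → K ∈ 𝓛 → ModuleCat.of R (L × K) ∈ 𝓛
  self_mem : ModuleCat.of R R ∈ 𝓛
  coprod_L : ∀ (ι : Type) (f : ι → ModuleCat.{0} R), (∀ i, f i ∈ 𝓛) →
    ModuleCat.of R (⨁ i, f i) ∈ 𝓛
  ext_L : ∀ {A B C : ModuleCat.{0} R} (f : A ⟶ B) (g : B ⟶ C),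
    SES f g → A ∈ 𝓛 → C ∈ 𝓛 → B ∈ 𝓛

/-- A doubly infinite exact sequence of projectives which stays exact after applying
`Hom_R(-, T)` for every `T` in the class `𝓣`. -/
structure IsTotallyAcyclicWrt (𝓣 : Set (ModuleCat.{0} R))
    (C : ChainComplex (ModuleCat.{0} R) ℤ) : Prop where
  projective : ∀ n, Projective (C.X n)
  exact : ∀ n, (C.sc n).Exact
  homExact : ∀ T ∈ 𝓣, ∀ (n : ℤ) (g : C.X n ⟶ T), C.d (n + 1) n ≫ g = 0 →
    ∃ h : C.X (n - 1) ⟶ T, C.d n (n - 1) ≫ h = g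

/-- `M` is Gorenstein projective relative to the class `𝓣`:  it is a kernel in a
`Hom_R(-, 𝓣)`-exact exact sequence of projective modules. -/
def IsGProj (𝓣 : Set (ModuleCat.{0} R)) (M : ModuleCat.{0} R) : Prop :=
  ∃ C : ChainComplex (ModuleCat.{0} R) ℤ, IsTotallyAcyclicWrt 𝓣 C ∧
    ∃ n : ℤ, Nonempty (M ≅ kernel (C.d n (n - 1)))

/-- `M` is strongly Gorenstein `(𝓛,𝓐)`-projective. -/
def IsSGProj (𝓣 : Set (ModuleCat.{0} R)) (M : ModuleCat.{0} R) : Prop :=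
  ∃ (P : ModuleCat.{0} R) (f : P ⟶ P), Projective P ∧
    (∃ w : f ≫ f = 0, (ShortComplex.mk f f w).Exact) ∧
    (∀ T ∈ 𝓣, ∀ g : P ⟶ T, f ≫ g = 0 → ∃ h : P ⟶ T, f ≫ h = g) ∧
    Nonempty (M ≅ kernel f)

/-- Resolution dimension of `M` with respect to a class `𝓒` is at most `n`. -/
def ResDimLE (𝓒 : Set (ModuleCat.{0} R)) : ℕ → ModuleCat.{0} R → Prop
  | 0, M => M ∈ 𝓒
  | n + 1, M => ∃ (K C : ModuleCat.{0} R) (f : K ⟶ C) (g : C ⟶ M),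
      C ∈ 𝓒 ∧ SES f g ∧ ResDimLE 𝓒 n K

/-- `K` is an `n`-th kernel of an exact sequence `0 → K → C_{n-1} → ⋯ → C₀ → M → 0`
with all `Cᵢ` in `𝓒`. -/
def IsNthSyzygy (𝓒 : Set (ModuleCat.{0} R)) : ℕ → ModuleCat.{0} R → ModuleCat.{0} R → Prop
  | 0, M, K => Nonempty (K ≅ M)
  | n + 1, M, K => ∃ (S C : ModuleCat.{0} R) (f : S ⟶ C) (g : C ⟶ M),
      C ∈ 𝓒 ∧ SES f g ∧ IsNthSyzygy 𝓒 n S K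

/-- A left Frobenius pair `(𝓧, ω)`. -/
structure LeftFrobeniusPair (𝓧 ω : Set (ModuleCat.{0} R)) : Prop where
  summands_X : ∀ X ∈ 𝓧, ∀ (Y : ModuleCat.{0} R) (i : Y ⟶ X) (p : X ⟶ Y),
    i ≫ p = 𝟙 Y → Y ∈ 𝓧
  extensions_X : ∀ {A B C : ModuleCat.{0} R} (f : A ⟶ B) (g : B ⟶ C),
    SES f g → A ∈ 𝓧 → C ∈ 𝓧 → B ∈ 𝓧
  kerEpi_X : ∀ {A B C : ModuleCat.{0} R} (f : A ⟶ B) (g : B ⟶ C),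
    SES f g → B ∈ 𝓧 → C ∈ 𝓧 → A ∈ 𝓧
  subset : ω ⊆ 𝓧
  inj : ∀ X ∈ 𝓧, ∀ W ∈ ω, ∀ i : ℕ, 1 ≤ i → ExtVanish i X W
  cogen : ∀ X ∈ 𝓧, ∃ (W X' : ModuleCat.{0} R) (f : X ⟶ W) (g : W ⟶ X'),
    W ∈ ω ∧ X' ∈ 𝓧 ∧ SES f g
  summands_ω : ∀ W ∈ ω, ∀ (V : ModuleCat.{0} R) (i : V ⟶ W) (p : W ⟶ V),
    i ≫ p = 𝟙 V → V ∈ ω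



/-- Every projective module belongs to `𝓛`. -/
lemma proj_mem_L {𝓛 : Set (ModuleCat.{0} R)} {𝓐 : Set (ModuleCat.{0} Rᵐᵒᵖ)}
    (hdp : CompleteDualityPair 𝓛 𝓐) {P : ModuleCat.{0} R} (hP : Projective P) : P ∈ 𝓛 := by
  classical
  haveI := hP
  let F : ModuleCat.{0} R := ModuleCat.of R (⨁ _ : P, R)
  have hF : F ∈ 𝓛 := hdp.coprod_L P (fun _ => ModuleCat.of R R) (fun _ => hdp.self_mem)
  let π : F ⟶ P := ModuleCat.ofHom (DirectSum.toModule R P P (fun p => LinearMap.toSpanSingleton R P p))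
  have hπ : Function.Surjective π := fun x =>
    ⟨DirectSum.lof R (↥P) (fun _ => R) x (1:R), by
      show (DirectSum.toModule R (↥P) P fun p => LinearMap.toSpanSingleton R P p)
        ((DirectSum.lof R (↥P) (fun _ => R) x) 1) = x
      rw [DirectSum.toModule_lof]; simp⟩
  haveI : Epi π := (ModuleCat.epi_iff_surjective π).mpr hπ
  exact hdp.summands_L F hF P (Projective.factorThru (𝟙 P) π) π (Projective.factorThru_comp _ _)

/-- A reindexed form of the `Hom`-exactness property of a totally acyclic complex. -/
lemma homExact' {𝓛 : Set (ModuleCat.{0} R)} {C : ChainComplex (ModuleCat.{0} R) ℤ}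
    (hC : IsTotallyAcyclicWrt 𝓛 C) {T : ModuleCat.{0} R} (hT : T ∈ 𝓛)
    (a b : ℤ) (hab : b = a + 1) (g : C.X b ⟶ T) (hg : C.d (b+1) b ≫ g = 0) :
    ∃ h : C.X a ⟶ T, C.d b a ≫ h = g := by
  have ha : a = b - 1 := by omega
  subst ha
  exact hC.homExact T hT b g hg

/-- If `K` has projective dimension at most `n`, then any map `C.X b ⟶ K` killed by the
incoming differential of a totally acyclic complex factors through the outgoing one. -/
lemma lft_of_findim {𝓛 : Set (ModuleCat.{0} R)} {𝓐 : Set (ModuleCat.{0} Rᵐᵒᵖ)}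
    (hdp : CompleteDualityPair 𝓛 𝓐) {C : ChainComplex (ModuleCat.{0} R) ℤ}
    (hC : IsTotallyAcyclicWrt 𝓛 C) :
    ∀ (n : ℕ) (K : ModuleCat.{0} R), ResDimLE {P : ModuleCat.{0} R | Projective P} n K →
    ∀ (a b : ℤ), b = a + 1 → ∀ (g : C.X b ⟶ K), C.d (b+1) b ≫ g = 0 →
    ∃ h : C.X a ⟶ K, C.d b a ≫ h = g := by
  intro n
  induction n with
  | zero =>
    intro K hK a b hab g hg
    exact homExact' hC (proj_mem_L hdp hK) a b hab g hg
  | succ n ih =>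
    intro K hK a b hab g hg
    obtain ⟨K', P, f, p, hP, ⟨w, hse⟩, hK'⟩ := hK
    haveI : Epi p := hse.epi_g
    haveI : Mono f := hse.mono_f
    haveI : Projective (C.X b) := hC.projective b
    set g' : C.X b ⟶ P := Projective.factorThru g p with hg'def
    have hg' : g' ≫ p = g := Projective.factorThru_comp g p
    have hu0 : (C.d (b+1) b ≫ g') ≫ p = 0 := by rw [Category.assoc, hg', hg]
    set u := hse.exact.lift (C.d (b+1) b ≫ g') hu0 with hudef
    have hu : u ≫ f = C.d (b+1) b ≫ g' := hse.exact.lift_f _ _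
    have hdu : C.d (b+1+1) (b+1) ≫ u = 0 := by
      rw [← cancel_mono f]
      simp [Category.assoc, hu, HomologicalComplex.d_comp_d_assoc]
    obtain ⟨v, hv⟩ := ih K' hK' b (b+1) rfl u hdu
    have h2 : C.d (b+1) b ≫ (g' - v ≫ f) = 0 := by
      rw [Preadditive.comp_sub, ← Category.assoc, hv, hu, sub_self]
    obtain ⟨h', hh'⟩ := homExact' hC (proj_mem_L hdp hP) a b hab (g' - v ≫ f) h2
    refine ⟨h' ≫ p, ?_⟩
    rw [← Category.assoc, hh', Preadditive.sub_comp, hg', Category.assoc, w, comp_zero, sub_zero]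

theorem stmt5
    (R : Type) [Ring R] (𝓛 : Set (ModuleCat.{0} R)) (𝓐 : Set (ModuleCat.{0} Rᵐᵒᵖ))
    (hdp : CompleteDualityPair 𝓛 𝓐) (M : ModuleCat.{0} R) (hM : IsGProj 𝓛 M)
    (hpd : ∃ n : ℕ, ResDimLE {P : ModuleCat.{0} R | Projective P} n M) :
    Projective M := by
  classical
  obtain ⟨C, hC, n0, ⟨e0⟩⟩ := hM
  obtain ⟨npd, hpd⟩ := hpd
  -- concrete exactness of the complex
  have hex : ∀ (i j k : ℤ), i = j + 1 → j = k + 1 →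
      ∀ x : C.X j, C.d j k x = 0 → ∃ y : C.X i, C.d i j y = x := by
    intro i j k hij hjk x hx
    have h : C.ExactAt j := hC.exact j
    rw [HomologicalComplex.exactAt_iff' C i j k
      (by rw [ChainComplex.prev]; omega) (by rw [ChainComplex.next]; omega)] at h
    rw [ShortComplex.moduleCat_exact_iff] at h
    exact h x hx
  cases npd with
  | zero => exact hpd
  | succ npd =>
    obtain ⟨K, P, f, p, hP, ⟨w, hse⟩, hK⟩ := hpd
    haveI hPp : Projective P := hP
    haveI : Epi p := hse.epi_g
    haveI : Mono f := hse.mono_f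
    -- the epimorphism from `C.X (n0+1)` onto the kernel
    set dk := C.d n0 (n0-1) with hdk
    let e : C.X (n0+1) ⟶ kernel dk :=
      kernel.lift dk (C.d (n0+1) n0) (C.d_comp_d _ _ _)
    have he : e ≫ kernel.ι dk = C.d (n0+1) n0 := kernel.lift_ι _ _ _
    have hιinj : Function.Injective (kernel.ι dk) :=
      (ModuleCat.mono_iff_injective _).mp inferInstance
    haveI hee : Epi e := by
      rw [ModuleCat.epi_iff_surjective]
      intro y
      have hy : dk ((kernel.ι dk) y) = 0 := by
        have := kernel.condition dk
        calc dk ((kernel.ι dk) y) = (kernel.ι dk ≫ dk) y := rfl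
          _ = (0 : kernel dk ⟶ C.X (n0-1)) y := by rw [kernel.condition dk]
          _ = 0 := rfl
      obtain ⟨x, hx⟩ := hex (n0+1) n0 (n0-1) rfl (by omega) ((kernel.ι dk) y) hy
      refine ⟨x, hιinj ?_⟩
      calc (kernel.ι dk) (e x) = (e ≫ kernel.ι dk) x := rfl
        _ = C.d (n0+1) n0 x := by rw [he]
        _ = (kernel.ι dk) y := hx
    have wS : C.d (n0+1+1) (n0+1) ≫ e = 0 := by
      rw [← cancel_mono (kernel.ι dk), Category.assoc, he,
        HomologicalComplex.d_comp_d, zero_comp]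
    set S := ShortComplex.mk (C.d (n0+1+1) (n0+1)) e wS with hS
    have hSex : S.Exact := by
      rw [ShortComplex.moduleCat_exact_iff]
      intro x hx
      have hx' : C.d (n0+1) n0 x = 0 := by
        calc C.d (n0+1) n0 x = (e ≫ kernel.ι dk) x := by rw [he]
          _ = (kernel.ι dk) (e x) := rfl
          _ = (kernel.ι dk) 0 := by rw [hx]
          _ = 0 := map_zero _
      exact hex (n0+1+1) (n0+1) n0 rfl rfl x hx'
    -- lift `e ≫ e0.inv` through `p`, correcting by a map into `K`
    haveI : Projective (C.X (n0+1)) := hC.projective (n0+1)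
    set g : C.X (n0+1) ⟶ M := e ≫ e0.inv with hgdef
    have hgz : C.d (n0+1+1) (n0+1) ≫ g = 0 := by
      rw [hgdef, ← Category.assoc, wS, zero_comp]
    set g' : C.X (n0+1) ⟶ P := Projective.factorThru g p with hg'def
    have hg' : g' ≫ p = g := Projective.factorThru_comp g p
    have hu0 : (C.d (n0+1+1) (n0+1) ≫ g') ≫ p = 0 := by
      rw [Category.assoc, hg', hgz]
    set u := hse.exact.lift (C.d (n0+1+1) (n0+1) ≫ g') hu0 with hudef
    have hu : u ≫ f = C.d (n0+1+1) (n0+1) ≫ g' := hse.exact.lift_f _ _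
    have hdu : C.d (n0+1+1+1) (n0+1+1) ≫ u = 0 := by
      rw [← cancel_mono f]
      simp [Category.assoc, hu, HomologicalComplex.d_comp_d_assoc]
    obtain ⟨v, hv⟩ := lft_of_findim hdp hC npd K hK (n0+1) (n0+1+1) rfl u hdu
    have hs0 : C.d (n0+1+1) (n0+1) ≫ (g' - v ≫ f) = 0 := by
      rw [Preadditive.comp_sub, ← Category.assoc, hv, hu, sub_self]
    -- descend along `e`
    set t : (kernel dk : ModuleCat.{0} R) ⟶ P := hSex.desc (g' - v ≫ f) hs0 with htdef
    have ht : e ≫ t = g' - v ≫ f := hSex.g_desc _ _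
    have htp : t ≫ p = e0.inv := by
      rw [← cancel_epi e, ← Category.assoc, ht, Preadditive.sub_comp, hg',
        Category.assoc, w, comp_zero, sub_zero, hgdef]
    set s : M ⟶ P := e0.hom ≫ t with hsdef
    have hs : s ≫ p = 𝟙 M := by
      rw [hsdef, Category.assoc, htp, e0.hom_inv_id]
    constructor
    intro E X ff ee hee
    exact ⟨s ≫ Projective.factorThru (p ≫ ff) ee, by
      rw [Category.assoc, Projective.factorThru_comp, ← Category.assoc, hs,
        Category.id_comp]⟩


end DualityPaper
end

section
/- A Gorenstein (L,A)-projective module of finite flat dimension is projective. -/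
open CategoryTheory CategoryTheory.Limits DirectSum

namespace DualityPaper

variable {R : Type} [Ring R]

/-! ### Auxiliary lemmas -/

lemma proj_retract {C : Type*} [Category C] {K X : C} (i : K ⟶ X) (r : X ⟶ K)
    (h : i ≫ r = 𝟙 K) (hX : Projective X) : Projective K :=
  ⟨fun f e _ => by
    obtain ⟨f', hf'⟩ := hX.factors (r ≫ f) e
    exact ⟨i ≫ f', by rw [Category.assoc, hf', ← Category.assoc, h, Category.id_comp]⟩⟩

/-- The dual of a morphism, on character modules. -/
def dualHom {A B : ModuleCat.{0} R} (p : A ⟶ B) : charL B ⟶ charL A := ModuleCat.ofHom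
 { toFun := fun f => AddMonoidHom.comp (show ↥B →+ AddCircle (1 : ℚ) from f)
    (p.hom : A →ₗ[R] B).toAddMonoidHom
   map_add' := fun f g => rfl
   map_smul' := fun r f => by
    refine AddMonoidHom.ext fun a => ?_
    show (show ↥B →+ AddCircle (1 : ℚ) from f) (r.unop • p a)
        = (show ↥B →+ AddCircle (1 : ℚ) from f) (p (r.unop • a))
    exact congrArg _ (map_smul (p.hom : A →ₗ[R] B) r.unop a).symm }

lemma flat_mem {𝓛 : Set (ModuleCat.{0} R)} {𝓐 : Set (ModuleCat.{0} Rᵐᵒᵖ)}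
    (hdp : CompleteDualityPair 𝓛 𝓐) (F : ModuleCat.{0} R) (hF : IsFlatMod F) : F ∈ 𝓛 := by
  classical
  have hPL := hdp.coprod_L F (fun _ => ModuleCat.of R R) (fun _ => hdp.self_mem)
  let P : ModuleCat.{0} R := ModuleCat.of R (⨁ _ : F, ↥(ModuleCat.of R R))
  have hPL : P ∈ 𝓛 := hPL
  let p : P ⟶ F := ModuleCat.ofHom (DirectSum.toModule R F F
    (fun x => (LinearMap.toSpanSingleton R F x : ↥(ModuleCat.of R R) →ₗ[R] F)))
  have hpsurj : Function.Surjective p := by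
    intro y
    refine ⟨DirectSum.lof R F (fun _ => ↥(ModuleCat.of R R)) y (1 : R), ?_⟩
    have h4 := DirectSum.toModule_lof (R := R) (ι := ↥F)
      (M := fun _ : ↥F => ↥(ModuleCat.of R R)) (N := ↥F)
      (φ := fun x => (LinearMap.toSpanSingleton R F x : ↥(ModuleCat.of R R) →ₗ[R] F))
      y (1 : R)
    refine Eq.trans ?_ (h4.trans ?_)
    · rfl
    · exact one_smul R y
  haveI : CategoryTheory.Injective (charL F) := hF
  haveI : Mono (dualHom p) := (ModuleCat.mono_iff_injective (dualHom p)).mpr (by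
    intro f g hfg
    have h5 : @Eq (↥P →+ AddCircle (1 : ℚ)) (dualHom p f) (dualHom p g) := hfg
    refine AddMonoidHom.ext fun b => ?_
    obtain ⟨a, rfl⟩ := hpsurj b
    exact DFunLike.congr_fun h5 a)
  let r : charL P ⟶ charL F := Injective.factorThru (𝟙 (charL F)) (dualHom p)
  have hr : dualHom p ≫ r = 𝟙 (charL F) := Injective.comp_factorThru _ _
  have hAF : charL F ∈ 𝓐 := hdp.summands_A (charL P) ((hdp.char_mem_iff P).mp hPL)
    (charL F) (dualHom p) r hr
  exact (hdp.char_mem_iff F).mpr hAF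

lemma ses_conc {A B D : ModuleCat.{0} R} {f : A ⟶ B} {g : B ⟶ D} (h : SES f g) :
    Function.Injective f ∧ Function.Surjective g ∧ LinearMap.range f.hom = LinearMap.ker g.hom := by
  obtain ⟨w, hse⟩ := h
  exact ⟨hse.moduleCat_injective_f, hse.moduleCat_surjective_g,
    hse.exact.moduleCat_range_eq_ker⟩

section Complex

variable {𝓛 : Set (ModuleCat.{0} R)} {C : ChainComplex (ModuleCat.{0} R) ℤ}

lemma d_d_zero (a b c : ℤ) (x : C.X a) : C.d b c (C.d a b x) = 0 :=
  DFunLike.congr_fun (congrArg ModuleCat.Hom.hom (C.d_comp_d a b c)) x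

lemma exact_conc (hC : IsTotallyAcyclicWrt 𝓛 C) (a b c : ℤ) (hab : a = b + 1) (hbc : b = c + 1)
    (x : C.X b) (hx : C.d b c x = 0) : ∃ y : C.X a, C.d a b y = x := by
  subst hab
  have hc : c = b - 1 := by omega
  subst hc
  have h1 : (C.sc' (b+1) b (b-1)).Exact := by
    rw [← C.exactAt_iff' (b+1) b (b-1) (ChainComplex.prev ℤ b) (ChainComplex.next ℤ b),
      HomologicalComplex.exactAt_iff]
    exact hC.exact b
  rw [ShortComplex.moduleCat_exact_iff] at h1
  exact h1 x hx

lemma homExact_conc (hC : IsTotallyAcyclicWrt 𝓛 C) {T : ModuleCat.{0} R} (hT : T ∈ 𝓛) (a b c : ℤ)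
    (hab : a = b + 1) (hbc : b = c + 1) (g : C.X b ⟶ T) (hg : C.d a b ≫ g = 0) :
    ∃ h : C.X c ⟶ T, C.d b c ≫ h = g := by
  subst hab
  have hc : c = b - 1 := by omega
  subst hc
  exact hC.homExact T hT b g hg

lemma extend_lemma (hC : IsTotallyAcyclicWrt 𝓛 C) {T : ModuleCat.{0} R} (hT : T ∈ 𝓛)
    (a b : ℤ) (hab : a = b + 1)
    (φ : ModuleCat.of R (LinearMap.ker (C.d a b).hom) ⟶ T) :
    ∃ ψ : C.X a ⟶ T, ∀ k : LinearMap.ker (C.d a b).hom, ψ k.1 = φ k := by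
  subst hab
  let e₂ : C.X (b+1+1) ⟶ ModuleCat.of R (LinearMap.ker (C.d (b+1) b).hom) :=
    ModuleCat.ofHom (LinearMap.codRestrict (LinearMap.ker (C.d (b+1) b).hom) (C.d (b+1+1) (b+1)).hom
      (fun x => LinearMap.mem_ker.mpr (d_d_zero (b+1+1) (b+1) b x)))
  obtain ⟨h, hh⟩ := homExact_conc hC hT (b+1+1+1) (b+1+1) (b+1) rfl rfl (e₂ ≫ φ) (by
    ext x
    show φ (e₂ (C.d (b+1+1+1) (b+1+1) x)) = 0
    have : e₂ (C.d (b+1+1+1) (b+1+1) x) = 0 :=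
      Subtype.ext (d_d_zero (b+1+1+1) (b+1+1) (b+1) x)
    rw [this, map_zero])
  refine ⟨h, fun k => ?_⟩
  obtain ⟨y, hy⟩ := exact_conc hC (b+1+1) (b+1) b rfl rfl k.1 k.2
  have h1 : h (C.d (b+1+1) (b+1) y) = φ (e₂ y) := DFunLike.congr_fun (congrArg ModuleCat.Hom.hom hh) y
  have h2 : e₂ y = k := Subtype.ext hy
  rw [hy] at h1
  rw [h1, h2]

lemma split_lemma (hC : IsTotallyAcyclicWrt 𝓛 C) (a b c : ℤ) (hab : a = b + 1) (hbc : b = c + 1)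
    {T E : ModuleCat.{0} R} (f : T ⟶ E) (g : E ⟶ ModuleCat.of R (LinearMap.ker (C.d b c).hom))
    (hf : Function.Injective f) (hg : Function.Surjective g)
    (hfg : LinearMap.range f.hom = LinearMap.ker g.hom)
    (EXT : ∀ φ : ModuleCat.of R (LinearMap.ker (C.d a b).hom) ⟶ T,
      ∃ ψ : C.X a ⟶ T, ∀ k : LinearMap.ker (C.d a b).hom, ψ k.1 = φ k) :
    ∃ s : ModuleCat.of R (LinearMap.ker (C.d b c).hom) ⟶ E, ∀ x, g (s x) = x := by
  haveI : Epi g := (ModuleCat.epi_iff_surjective g).mpr hg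
  haveI := hC.projective a
  let e : C.X a ⟶ ModuleCat.of R (LinearMap.ker (C.d b c).hom) :=
    ModuleCat.ofHom (LinearMap.codRestrict (LinearMap.ker (C.d b c).hom) (C.d a b).hom
      (fun x => LinearMap.mem_ker.mpr (d_d_zero a b c x)))
  have hesurj : Function.Surjective e := by
    rintro ⟨x, hx⟩
    obtain ⟨y, hy⟩ := exact_conc hC a b c hab hbc x hx
    exact ⟨y, Subtype.ext hy⟩
  let et : C.X a ⟶ E := Projective.factorThru e g
  have het : ∀ x, g (et x) = e x := fun x =>
    DFunLike.congr_fun (congrArg ModuleCat.Hom.hom (Projective.factorThru_comp e g)) x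
  have hmem : ∀ k : LinearMap.ker (C.d a b).hom, et k.1 ∈ LinearMap.range f.hom := by
    intro k
    rw [hfg, LinearMap.mem_ker, het]
    exact Subtype.ext k.2
  let eqv := LinearEquiv.ofInjective (f.hom : T →ₗ[R] E) hf
  let φ : ModuleCat.of R (LinearMap.ker (C.d a b).hom) ⟶ T :=
    ModuleCat.ofHom (eqv.symm.toLinearMap.comp
      (LinearMap.codRestrict (LinearMap.range f.hom)
        ((et.hom : C.X a →ₗ[R] E).comp (LinearMap.ker (C.d a b).hom).subtype) (fun k => hmem k)))
  have hφ : ∀ k : LinearMap.ker (C.d a b).hom, f (φ k) = et k.1 := by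
    intro k
    show f (eqv.symm ⟨et k.1, hmem k⟩) = et k.1
    have h1 : (eqv (eqv.symm ⟨et k.1, hmem k⟩) : E) = (⟨et k.1, hmem k⟩ : LinearMap.range f.hom) :=
      congrArg Subtype.val (eqv.apply_symm_apply _)
    rw [← LinearEquiv.ofInjective_apply (f.hom : T →ₗ[R] E) (h := hf)]
    exact h1
  obtain ⟨ψ, hψ⟩ := EXT φ
  let θ : C.X a ⟶ E := et - ψ ≫ f
  have hθ : ∀ x : C.X a, θ x = et x - f (ψ x) := fun x => rfl
  have hker : ∀ x : C.X a, C.d a b x = 0 → θ x = 0 := by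
    intro x hx
    rw [hθ, hψ ⟨x, hx⟩, hφ ⟨x, hx⟩, sub_self]
  have hkere : LinearMap.ker (e.hom : C.X a →ₗ[R] _) = LinearMap.ker (C.d a b).hom :=
    LinearMap.ker_codRestrict _ _ _
  have hle : LinearMap.ker (e.hom : C.X a →ₗ[R] _) ≤ LinearMap.ker (θ.hom : C.X a →ₗ[R] E) := by
    rw [hkere]
    intro x hx
    exact hker x hx
  let q := LinearMap.quotKerEquivOfSurjective (e.hom : C.X a →ₗ[R] _) hesurj
  let s : ModuleCat.of R (LinearMap.ker (C.d b c).hom) ⟶ E :=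
    ModuleCat.ofHom ((Submodule.liftQ (LinearMap.ker (e.hom : C.X a →ₗ[R] _)) (θ.hom : C.X a →ₗ[R] E) hle).comp
      q.symm.toLinearMap)
  have hs : ∀ y : C.X a, s (e y) = θ y := by
    intro y
    have h1 : q.symm (e y) = Submodule.Quotient.mk y := by
      apply q.injective
      rw [q.apply_symm_apply]
      rfl
    show Submodule.liftQ _ _ hle (q.symm (e y)) = θ y
    rw [h1]
    rfl
  refine ⟨s, fun x => ?_⟩
  obtain ⟨y, rfl⟩ := hesurj x
  rw [hs, hθ, map_sub, het]
  have hz : g (f (ψ y)) = 0 := by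
    have : f (ψ y) ∈ LinearMap.ker g.hom := hfg ▸ LinearMap.mem_range_self _ _
    exact this
  rw [hz, sub_zero]

end Complex

lemma lift_lemma {N' F N K : ModuleCat.{0} R} (f : N' ⟶ F) (p : F ⟶ N)
    (hf : Function.Injective f) (hp : Function.Surjective p)
    (hfp : LinearMap.range f.hom = LinearMap.ker p.hom)
    (hsplit : ∀ (E : ModuleCat.{0} R) (u : N' ⟶ E) (v : E ⟶ K),
      Function.Injective u → Function.Surjective v →
      LinearMap.range u.hom = LinearMap.ker v.hom → ∃ s : K ⟶ E, ∀ x, v (s x) = x)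
    (φ : K ⟶ N) : ∃ φt : K ⟶ F, ∀ x, p (φt x) = φ x := by
  let δ : (F × K) →ₗ[R] N :=
    ((p.hom : F →ₗ[R] N).comp (LinearMap.fst R F K)) - ((φ.hom : K →ₗ[R] N).comp (LinearMap.snd R F K))
  have hδ : ∀ z : F × K, δ z = p z.1 - φ z.2 := fun z => rfl
  let Q := LinearMap.ker δ
  let E : ModuleCat.{0} R := ModuleCat.of R Q
  let v : E ⟶ K := ModuleCat.ofHom ((LinearMap.snd R F K).comp Q.subtype)
  let u : N' ⟶ E := ModuleCat.ofHom <| LinearMap.codRestrict Q ((LinearMap.inl R F K).comp (f.hom : N' →ₗ[R] F))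
    (fun n => by
      rw [LinearMap.mem_ker, hδ]
      show p (f n) - φ 0 = 0
      have h1 : f n ∈ LinearMap.ker p.hom := hfp ▸ LinearMap.mem_range_self _ _
      rw [map_zero, h1, sub_zero])
  have huval : ∀ n : N', (u n).1 = ((f n : F), (0 : K)) := fun n => rfl
  have hu : Function.Injective u := by
    intro x y hxy
    have h2 := congrArg (fun z : E => z.1.1) hxy
    exact hf h2
  have hv : Function.Surjective v := by
    intro k
    obtain ⟨w, hw⟩ := hp (φ k)
    exact ⟨⟨(w, k), by rw [LinearMap.mem_ker, hδ]; show p w - φ k = 0; rw [hw, sub_self]⟩, rfl⟩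
  have huv : LinearMap.range u.hom = LinearMap.ker v.hom := by
    apply le_antisymm
    · rintro _ ⟨n, rfl⟩
      exact LinearMap.mem_ker.mpr rfl
    · rintro ⟨⟨w, k⟩, hq⟩ hk
      have hk0 : k = 0 := hk
      have hw : w ∈ LinearMap.ker p.hom := by
        have h3 := LinearMap.mem_ker.mp hq
        rw [hδ] at h3
        simp only [hk0, map_zero, sub_zero] at h3
        exact h3
      rw [← hfp] at hw
      obtain ⟨n, hn⟩ := hw
      refine ⟨n, Subtype.ext ?_⟩
      rw [huval n]
      exact Prod.ext hn hk0.symm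
  obtain ⟨s, hs⟩ := hsplit E u v hu hv huv
  let π₁ : E ⟶ F := ModuleCat.ofHom ((LinearMap.fst R F K).comp Q.subtype)
  refine ⟨s ≫ π₁, fun k => ?_⟩
  have hmem := (s k).2
  rw [LinearMap.mem_ker, hδ, sub_eq_zero] at hmem
  show p (s k).1.1 = φ k
  rw [hmem]
  show φ (v (s k)) = φ k
  rw [hs k]

lemma main_claim {𝓛 : Set (ModuleCat.{0} R)} {𝓐 : Set (ModuleCat.{0} Rᵐᵒᵖ)}
    (hdp : CompleteDualityPair 𝓛 𝓐) {C : ChainComplex (ModuleCat.{0} R) ℤ}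
    (hC : IsTotallyAcyclicWrt 𝓛 C) (n : ℕ) :
    ∀ (N : ModuleCat.{0} R), ResDimLE {F : ModuleCat.{0} R | IsFlatMod F} n N →
    ∀ (a b : ℤ), a = b + 1 →
    ∀ (E : ModuleCat.{0} R) (u : N ⟶ E) (v : E ⟶ ModuleCat.of R (LinearMap.ker (C.d a b).hom)),
      Function.Injective u → Function.Surjective v →
      LinearMap.range u.hom = LinearMap.ker v.hom →
      ∃ s : ModuleCat.of R (LinearMap.ker (C.d a b).hom) ⟶ E, ∀ x, v (s x) = x := by
  induction n with
  | zero =>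
    intro N hN a b hab E u v hu hv huv
    exact split_lemma hC (a+1) a b rfl hab u v hu hv huv
      (fun φ => extend_lemma hC (flat_mem hdp N hN) (a+1) a rfl φ)
  | succ n ih =>
    intro N hN a b hab E u v hu hv huv
    obtain ⟨K, C', f, g, hC'flat, hses, hK⟩ := hN
    obtain ⟨hfinj, hgsurj, hfg⟩ := ses_conc hses
    apply split_lemma hC (a+1) a b rfl hab u v hu hv huv
    intro φ
    obtain ⟨φt, hφt⟩ := lift_lemma f g hfinj hgsurj hfg
      (fun E' u' v' h1 h2 h3 => ih K hK (a+1) a rfl E' u' v' h1 h2 h3) φ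
    obtain ⟨ψ, hψ⟩ := extend_lemma hC (flat_mem hdp C' hC'flat) (a+1) a rfl φt
    refine ⟨ψ ≫ g, fun k => ?_⟩
    show g (ψ k.1) = φ k
    rw [hψ k]
    exact hφt k


theorem stmt6
    (R : Type) [Ring R] (𝓛 : Set (ModuleCat.{0} R)) (𝓐 : Set (ModuleCat.{0} Rᵐᵒᵖ))
    (hdp : CompleteDualityPair 𝓛 𝓐) (M : ModuleCat.{0} R) (hM : IsGProj 𝓛 M)
    (hfd : ∃ n : ℕ, ResDimLE {F : ModuleCat.{0} R | IsFlatMod F} n M) :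
    Projective M := by
  obtain ⟨C, hC, n, ⟨isoM⟩⟩ := hM
  obtain ⟨m, hm⟩ := hfd
  let eM : M ≅ ModuleCat.of R (LinearMap.ker (C.d n (n-1)).hom) :=
    isoM ≪≫ ModuleCat.kernelIsoKer (C.d n (n-1))
  have hKL : ModuleCat.of R (LinearMap.ker (C.d n (n-1)).hom) ∈ 𝓛 := by
    cases m with
    | zero =>
      exact hdp.isoClosed_L eM (flat_mem hdp M hm)
    | succ m =>
      obtain ⟨K, C', f, g, hC'flat, hses, hK⟩ := hm
      obtain ⟨hfinj, hgsurj, hfg⟩ := ses_conc hses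
      let g' : C' ⟶ ModuleCat.of R (LinearMap.ker (C.d n (n-1)).hom) := g ≫ eM.hom
      have hbij : Function.Bijective eM.hom := ConcreteCategory.bijective_of_isIso eM.hom
      have hg'surj : Function.Surjective g' := by
        intro y
        obtain ⟨z, hz⟩ := hbij.2 y
        obtain ⟨x, hx⟩ := hgsurj z
        exact ⟨x, by show eM.hom (g x) = y; rw [hx, hz]⟩
      have hgx : ∀ x, (g' x = 0 ↔ g x = 0) := by
        intro x
        constructor
        · intro h0
          apply hbij.1
          rw [map_zero]
          exact h0
        · intro h0
          show eM.hom (g x) = 0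
          rw [h0, map_zero]
      have hker : LinearMap.range f.hom = LinearMap.ker g'.hom := by
        rw [hfg]
        ext x
        rw [LinearMap.mem_ker, LinearMap.mem_ker]
        exact (hgx x).symm
      obtain ⟨s, hs⟩ := main_claim hdp hC m K hK n (n-1) (by omega) C' f g' hfinj hg'surj hker
      have hsg : s ≫ g' = 𝟙 (ModuleCat.of R (LinearMap.ker (C.d n (n-1)).hom)) := by
        refine ModuleCat.hom_ext (LinearMap.ext fun x => ?_)
        exact hs x
      exact hdp.summands_L C' (flat_mem hdp C' hC'flat) _ s g' hsg
  obtain ⟨ψ, hψ⟩ := extend_lemma hC hKL n (n-1) (by omega)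
    (𝟙 (ModuleCat.of R (LinearMap.ker (C.d n (n-1)).hom)))
  have hretr : (ModuleCat.ofHom (LinearMap.ker (C.d n (n-1)).hom).subtype :
      ModuleCat.of R (LinearMap.ker (C.d n (n-1)).hom) ⟶ C.X n) ≫ ψ = 𝟙 _ := by
    refine ModuleCat.hom_ext (LinearMap.ext fun k => ?_)
    exact hψ k
  have hprojK : Projective (ModuleCat.of R (LinearMap.ker (C.d n (n-1)).hom)) :=
    proj_retract _ ψ hretr (hC.projective n)
  exact proj_retract eM.hom eM.inv eM.hom_inv_id hprojK

end DualityPaper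
end
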